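/- Let ε ≥ 0 and n ∈ (1,∞). If a metric measure space (X,d,μ) satisfies ε-BM(n−1,n), then for every r > 0 its concentration function satisfies α_{(X,d,μ)}(r) ≤ 2·exp(−(n−1)·r²/π²). -/

import Mathlib

open MeasureTheory ENNReal

/-- The set of `ε`-approximated `t`-intermediate points between `A₀` and `A₁`. -/
def interSet {X : Type*} [PseudoMetricSpace X] (ε t : ℝ) (A₀ A₁ : Set X) : Set X :=
  {x | ∃ x₀ ∈ A₀, ∃ x₁ ∈ A₁,
    |dist x₀ x - t * dist x₀ x₁| ≤ ε ∧ |dist x x₁ - (1 - t) * dist x₀ x₁| ≤ ε}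

/-- The sine distortion coefficient `(sin(t·d)/(t·sin d))^{(n-1)/n}`, set to `+∞` when `d ≥ π`. -/
noncomputable def distCoef (n t d : ℝ) : ℝ≥0∞ :=
  if d < Real.pi then
    ENNReal.ofReal ((Real.sin (t * d) / (t * Real.sin d)) ^ ((n - 1) / n))
  else ⊤

/-- The `ε`-approximated Brunn–Minkowski inequality `ε-BM(n-1, n)`. -/
def BMCond {X : Type*} [PseudoMetricSpace X] [MeasurableSpace X]
    (μ : Measure X) (ε n : ℝ) : Prop :=
  ∀ A₀ A₁ : Set X, MeasurableSet A₀ → MeasurableSet A₁ → A₀.Nonempty → A₁.Nonempty →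
    ∀ t ∈ Set.Ioo (0 : ℝ) 1,
      ENNReal.ofReal (1 - t) * (⨅ x₀ ∈ A₀, ⨅ x₁ ∈ A₁, distCoef n (1 - t) (dist x₀ x₁)) *
          μ A₀ ^ (1 / n)
        + ENNReal.ofReal t * (⨅ x₀ ∈ A₀, ⨅ x₁ ∈ A₁, distCoef n t (dist x₀ x₁)) *
          μ A₁ ^ (1 / n)
      ≤ μ (interSet ε t A₀ A₁) ^ (1 / n)

/-- The concentration function `α(r) = sup {1 - μ(A_r) : μ(A) ≥ 1/2}`. -/
noncomputable def concFn {X : Type*} [PseudoMetricSpace X] [MeasurableSpace X]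
    (μ : Measure X) (r : ℝ) : ℝ :=
  sSup {v : ℝ | ∃ A : Set X, MeasurableSet A ∧ 1 / 2 ≤ μ A ∧
    v = 1 - (μ (Metric.thickening r A)).toReal}

set_option maxHeartbeats 1000000

open Real in
private lemma mul_cos_le_sin {y : ℝ} (h0 : 0 ≤ y) (h2 : y ≤ π / 2) : y * Real.cos y ≤ Real.sin y := by
  rcases eq_or_lt_of_le h0 with rfl | h0'
  · simp
  rcases eq_or_lt_of_le h2 with rfl | h2'
  · simp
  have hc : 0 < Real.cos y := Real.cos_pos_of_mem_Ioo ⟨by linarith [Real.pi_pos], h2'⟩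
  have := Real.lt_tan h0' h2'
  rw [Real.tan_eq_sin_div_cos, lt_div_iff₀ hc] at this
  linarith

open Real in
private lemma cos_le_exp_neg_sq_half {x : ℝ} (hx : 0 ≤ x) (hx2 : x ≤ π / 2) :
    Real.cos x ≤ Real.exp (-(x ^ 2) / 2) := by
  have key : Real.exp (x ^ 2 / 2) * Real.cos x ≤ 1 := by
    set f : ℝ → ℝ := fun y => Real.exp (y ^ 2 / 2) * Real.cos y with hf
    have hderiv : ∀ y : ℝ, HasDerivAt f (Real.exp (y ^ 2 / 2) * (y * Real.cos y - Real.sin y)) y := by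
      intro y
      have h1 : HasDerivAt (fun y : ℝ => y ^ 2 / 2) y y := by
        simpa using (hasDerivAt_pow 2 y).div_const 2
      have h2 : HasDerivAt (fun y : ℝ => Real.exp (y ^ 2 / 2)) (Real.exp (y ^ 2 / 2) * y) y := h1.exp
      have h3 : HasDerivAt (fun y => Real.exp (y ^ 2 / 2) * Real.cos y) (Real.exp (y ^ 2 / 2) * y * Real.cos y + Real.exp (y ^ 2 / 2) * -Real.sin y) y := h2.mul (Real.hasDerivAt_cos y)
      convert h3 using 1
      ring
    have hanti : AntitoneOn f (Set.Icc 0 (π / 2)) := by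
      apply antitoneOn_of_deriv_nonpos (convex_Icc _ _)
      · exact (Continuous.mul (by fun_prop) Real.continuous_cos).continuousOn
      · intro y hy
        exact ((hderiv y).differentiableAt).differentiableWithinAt
      · intro y hy
        rw [interior_Icc] at hy
        rw [(hderiv y).deriv]
        have hs := mul_cos_le_sin (le_of_lt hy.1) (le_of_lt hy.2)
        have : (0:ℝ) < Real.exp (y ^ 2 / 2) := Real.exp_pos _
        nlinarith
    have h0mem : (0:ℝ) ∈ Set.Icc 0 (π / 2) := Set.left_mem_Icc.mpr (by positivity)
    have := hanti h0mem ⟨hx, hx2⟩ hx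
    simpa [hf] using this
  have hep : (0:ℝ) < Real.exp (x ^ 2 / 2) := Real.exp_pos _
  calc Real.cos x = Real.exp (x ^ 2 / 2) * Real.cos x / Real.exp (x ^ 2 / 2) := by
        field_simp
    _ ≤ 1 / Real.exp (x ^ 2 / 2) := by gcongr
    _ = Real.exp (-(x ^ 2) / 2) := by
        rw [one_div, ← Real.exp_neg]; ring_nf

open Real in
private lemma core_real {n r a b : ℝ} (hn : 1 < n) (hr : 0 < r) (hrpi : r < π)
    (hb0 : 0 ≤ b) (ha : 1 / 2 ≤ a)
    (hineq : 1 / 2 * ((Real.cos (r / 2))⁻¹ ^ ((n - 1) / n)) * a ^ (1 / n)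
      + 1 / 2 * ((Real.cos (r / 2))⁻¹ ^ ((n - 1) / n)) * b ^ (1 / n) ≤ 1) :
    b ≤ 2 * Real.exp (-(n - 1) * r ^ 2 / Real.pi ^ 2) := by
  have hπ := Real.pi_pos
  set s : ℝ := 1 / n with hs
  set m : ℝ := (n - 1) / n with hm
  have hn0 : (0:ℝ) < n := by linarith
  have hs0 : 0 < s := by positivity
  have hs1 : s ≤ 1 := by rw [hs]; rw [div_le_one hn0]; linarith
  have hm0 : 0 ≤ m := by
    rw [hm]; exact div_nonneg (by linarith) hn0.le
  have hc : 0 < Real.cos (r / 2) := Real.cos_pos_of_mem_Ioo ⟨by linarith, by linarith⟩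
  have hc1 : Real.cos (r / 2) ≤ 1 := Real.cos_le_one _
  set c : ℝ := Real.cos (r / 2) with hcdef
  set K : ℝ := c⁻¹ ^ m with hK
  have hK0 : 0 < K := rpow_pos_of_pos (inv_pos.mpr hc) m
  have hKc : 2 / K = 2 * c ^ m := by
    rw [hK, Real.inv_rpow hc.le, div_eq_mul_inv, inv_inv]
  -- step 1 : a^s + b^s ≤ 2/K
  have step1 : a ^ s + b ^ s ≤ 2 / K := by
    rw [le_div_iff₀ hK0]; nlinarith [hineq]
  -- (1/2)^s ≤ a^s
  have step2 : (1/2 : ℝ) ^ s ≤ a ^ s := Real.rpow_le_rpow (by norm_num) ha hs0.le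
  have hbs : b ^ s ≤ 2 * c ^ m - (1/2 : ℝ) ^ s := by
    rw [← hKc]; linarith
  -- c ≤ exp (-r^2/8) ≤ ... ;  A := exp (-(m*r^2/π^2))
  set A : ℝ := Real.exp (-(m * r ^ 2 / π ^ 2)) with hA
  have hA0 : 0 < A := Real.exp_pos _
  have hmr : 0 ≤ m * r ^ 2 / π ^ 2 := by positivity
  have hA1 : A ≤ 1 := Real.exp_le_one_iff.mpr (by linarith)
  have hcm : c ^ m ≤ A := by
    have h1 : c ≤ Real.exp (-(r / 2) ^ 2 / 2) := cos_le_exp_neg_sq_half (by positivity) (by linarith)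
    have h2 : c ^ m ≤ Real.exp (-(r / 2) ^ 2 / 2) ^ m := Real.rpow_le_rpow hc.le h1 hm0
    have h3 : Real.exp (-(r / 2) ^ 2 / 2) ^ m = Real.exp (-(m * r ^ 2 / 8)) := by
      rw [← Real.exp_mul]; ring_nf
    have h4 : Real.exp (-(m * r ^ 2 / 8)) = A ^ (π ^ 2 / 8) := by
      rw [hA, ← Real.exp_mul]
      congr 1
      have hpi2 : (π:ℝ) ^ 2 ≠ 0 := by positivity
      field_simp
    have h5 : A ^ (π ^ 2 / 8) ≤ A ^ (1:ℝ) := by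
      apply Real.rpow_le_rpow_of_exponent_ge hA0 hA1
      nlinarith [Real.pi_gt_three]
    rw [Real.rpow_one] at h5
    calc c ^ m ≤ Real.exp (-(r / 2) ^ 2 / 2) ^ m := h2
      _ = A ^ (π ^ 2 / 8) := by rw [h3, h4]
      _ ≤ A := h5
  -- 2 - 2^s ≥ 0 and 2 ≤ 2^s + (1/2)^s
  have h2s2 : (2:ℝ) ^ s ≤ 2 := by
    calc (2:ℝ) ^ s ≤ (2:ℝ) ^ (1:ℝ) := Real.rpow_le_rpow_of_exponent_le (by norm_num) hs1
      _ = 2 := Real.rpow_one 2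
  have h2s0 : (0:ℝ) < (2:ℝ) ^ s := Real.rpow_pos_of_pos (by norm_num) s
  have hhalf : (1/2:ℝ) ^ s = ((2:ℝ) ^ s)⁻¹ := by
    rw [show (1/2:ℝ) = 2⁻¹ by norm_num, Real.inv_rpow (by norm_num)]
  have hamgm : (2:ℝ) ≤ (2:ℝ) ^ s + ((2:ℝ) ^ s)⁻¹ := by
    have h := mul_inv_cancel₀ h2s0.ne'
    nlinarith [sq_nonneg ((2:ℝ) ^ s - 1)]
  -- combine : b^s ≤ 2^s * A
  have hbsA : b ^ s ≤ (2:ℝ) ^ s * A := by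
    have e1 : (2 - (2:ℝ) ^ s) * A ≤ (2 - (2:ℝ) ^ s) * 1 :=
      mul_le_mul_of_nonneg_left hA1 (by linarith)
    rw [hhalf] at hbs
    nlinarith
  -- raise to the power n
  have hfin : b ≤ ((2:ℝ) ^ s * A) ^ n := by
    have h1 : (b ^ s) ^ n ≤ ((2:ℝ) ^ s * A) ^ n :=
      Real.rpow_le_rpow (Real.rpow_nonneg hb0 s) hbsA hn0.le
    rwa [← Real.rpow_mul hb0, show s * n = 1 by rw [hs]; field_simp, Real.rpow_one] at h1
  have hexp : ((2:ℝ) ^ s * A) ^ n = 2 * Real.exp (-(n - 1) * r ^ 2 / π ^ 2) := by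
    rw [Real.mul_rpow (by positivity) hA0.le, ← Real.rpow_mul (by norm_num),
      show s * n = 1 by rw [hs]; field_simp, Real.rpow_one, hA, ← Real.exp_mul]
    congr 1
    rw [hm]
    field_simp
  rw [← hexp]
  exact hfin

theorem main_concentration (X : Type*) [MetricSpace X] [CompleteSpace X]
    [TopologicalSpace.SeparableSpace X] [MeasurableSpace X] [BorelSpace X]
    (μ : Measure X) [IsProbabilityMeasure μ] [μ.IsOpenPosMeasure]
    (ε n : ℝ) (hε : 0 ≤ ε) (hn : 1 < n) (hBM : BMCond μ ε n) :
    ∀ r : ℝ, 0 < r →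
      concFn μ r ≤ 2 * Real.exp (-(n - 1) * r ^ 2 / Real.pi ^ 2) := by
  intro r hr
  have hπ := Real.pi_pos
  have hn0 : (0:ℝ) < n := by linarith
  have hs0 : (0:ℝ) < 1 / n := by positivity
  have hrhs : 0 ≤ 2 * Real.exp (-(n - 1) * r ^ 2 / Real.pi ^ 2) := by positivity
  apply Real.sSup_le _ hrhs
  rintro v ⟨A, hA, hAμ, rfl⟩
  set T := Metric.thickening r A with hTdef
  have hTmeas : MeasurableSet T := Metric.isOpen_thickening.measurableSet
  have hμT : μ T ≠ ⊤ := measure_ne_top μ T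
  have hv : 1 - (μ T).toReal = (μ Tᶜ).toReal := by
    rw [measure_compl hTmeas hμT, measure_univ,
      ENNReal.toReal_sub_of_le prob_le_one one_ne_top, ENNReal.toReal_one]
  rw [hv]
  set B := Tᶜ with hBdef
  have hBmeas : MeasurableSet B := hTmeas.compl
  by_cases hB0 : μ B = 0
  · rw [hB0]; simpa using hrhs
  have hBne : B.Nonempty := by
    rcases B.eq_empty_or_nonempty with h | h
    · exact absurd (h ▸ measure_empty) hB0
    · exact h
  have hAne : A.Nonempty := by
    rcases A.eq_empty_or_nonempty with h | h
    · rw [h, measure_empty] at hAμ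
      exact absurd hAμ (by simp)
    · exact h
  have hμAne : μ A ≠ ⊤ := measure_ne_top μ A
  have hμBne : μ B ≠ ⊤ := measure_ne_top μ B
  have hμA0 : μ A ≠ 0 := by
    intro h; rw [h] at hAμ; exact absurd hAμ (by simp)
  -- distance bound
  have hdist : ∀ x₀ ∈ A, ∀ x₁ ∈ B, r ≤ dist x₀ x₁ := by
    intro x₀ hx₀ x₁ hx₁
    by_contra hlt
    push_neg at hlt
    exact hx₁ (Metric.mem_thickening_iff.mpr ⟨x₀, hx₀, by rwa [dist_comm]⟩)
  have hBM' := hBM A B hA hBmeas hAne hBne (1/2) ⟨by norm_num, by norm_num⟩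
  rw [show (1 - (1:ℝ)/2) = 1/2 by norm_num] at hBM'
  have hRHS1 : μ (interSet ε (1/2) A B) ^ ((1:ℝ) / n) ≤ 1 :=
    ENNReal.rpow_le_one prob_le_one hs0.le
  by_cases hrpi : r < Real.pi
  · -- main case
    have hc : 0 < Real.cos (r / 2) :=
      Real.cos_pos_of_mem_Ioo ⟨by linarith, by linarith⟩
    set K : ℝ := (Real.cos (r / 2))⁻¹ ^ ((n - 1) / n) with hKdef
    have hK0 : 0 ≤ K := Real.rpow_nonneg (inv_nonneg.mpr hc.le) _
    have hpair : ∀ x₀ ∈ A, ∀ x₁ ∈ B,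
        ENNReal.ofReal K ≤ distCoef n (1/2) (dist x₀ x₁) := by
      intro x₀ hx₀ x₁ hx₁
      set d := dist x₀ x₁ with hd
      have hrd : r ≤ d := hdist x₀ hx₀ x₁ hx₁
      by_cases hdpi : d < Real.pi
      · rw [distCoef, if_pos hdpi]
        apply ENNReal.ofReal_le_ofReal
        have hd2 : 0 < Real.sin (d / 2) :=
          Real.sin_pos_of_pos_of_lt_pi (by linarith) (by linarith)
        have hcd : 0 < Real.cos (d / 2) :=
          Real.cos_pos_of_mem_Ioo ⟨by linarith, by linarith⟩
        have hratio : Real.sin (1/2 * d) / (1/2 * Real.sin d) = (Real.cos (d / 2))⁻¹ := by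
          have hsin : Real.sin d = 2 * Real.sin (d / 2) * Real.cos (d / 2) := by
            rw [show d = 2 * (d / 2) by ring, Real.sin_two_mul]
            ring_nf
          rw [show (1:ℝ)/2 * d = d / 2 by ring, hsin]
          field_simp
        rw [hratio, hKdef]
        apply Real.rpow_le_rpow (inv_nonneg.mpr hc.le)
        · rw [inv_le_inv₀ hc hcd]
          exact Real.cos_le_cos_of_nonneg_of_le_pi (by linarith) (by linarith) (by linarith)
        · exact div_nonneg (by linarith) hn0.le
      · rw [distCoef, if_neg hdpi]
        exact le_top
    have hinf : ENNReal.ofReal K ≤ ⨅ x₀ ∈ A, ⨅ x₁ ∈ B, distCoef n (1/2) (dist x₀ x₁) :=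
      le_iInf fun x₀ => le_iInf fun hx₀ => le_iInf fun x₁ => le_iInf fun hx₁ =>
        hpair x₀ hx₀ x₁ hx₁
    have hchain : ENNReal.ofReal (1/2) * ENNReal.ofReal K * μ A ^ ((1:ℝ)/n)
        + ENNReal.ofReal (1/2) * ENNReal.ofReal K * μ B ^ ((1:ℝ)/n) ≤ 1 := by
      refine le_trans (add_le_add ?_ ?_) (le_trans hBM' hRHS1) <;>
        exact mul_le_mul_left (mul_le_mul_right hinf _) _
    -- convert to reals
    set a' := (μ A).toReal with ha'
    set b' := (μ B).toReal with hb'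
    have hA' : μ A = ENNReal.ofReal a' := (ENNReal.ofReal_toReal hμAne).symm
    have hB' : μ B = ENNReal.ofReal b' := (ENNReal.ofReal_toReal hμBne).symm
    rw [hA', hB'] at hchain
    rw [ENNReal.ofReal_rpow_of_nonneg ENNReal.toReal_nonneg hs0.le,
      ENNReal.ofReal_rpow_of_nonneg ENNReal.toReal_nonneg hs0.le] at hchain
    have h12K : (0:ℝ) ≤ 1/2 * K := mul_nonneg (by norm_num) hK0
    have hterm : ∀ x : ℝ≥0∞, (0:ℝ) ≤ 1/2 * K * x.toReal ^ ((1:ℝ)/n) := fun x =>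
      mul_nonneg h12K (Real.rpow_nonneg ENNReal.toReal_nonneg _)
    rw [← ENNReal.ofReal_mul (by norm_num : (0:ℝ) ≤ 1/2),
      ← ENNReal.ofReal_mul h12K, ← ENNReal.ofReal_mul h12K,
      ← ENNReal.ofReal_add (hterm (μ A)) (hterm (μ B))] at hchain
    have hreal := ENNReal.ofReal_le_one.mp hchain
    have ha2 : 1 / 2 ≤ a' := by
      have := (ENNReal.toReal_le_toReal (by norm_num) hμAne).mpr hAμ
      simpa using this
    exact core_real hn hr hrpi ENNReal.toReal_nonneg ha2 hreal
  · -- r ≥ π : contradiction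
    exfalso
    push_neg at hrpi
    have hinf : (⨅ x₀ ∈ A, ⨅ x₁ ∈ B, distCoef n (1/2) (dist x₀ x₁)) = ⊤ := by
      simp only [iInf_eq_top]
      intro x₀ hx₀ x₁ hx₁
      rw [distCoef, if_neg (not_lt.mpr (le_trans hrpi (hdist x₀ hx₀ x₁ hx₁)))]
    rw [hinf] at hBM'
    have hBpos : μ B ^ ((1:ℝ)/n) ≠ 0 :=
      (ENNReal.rpow_pos (pos_iff_ne_zero.mpr hB0) hμBne).ne'
    have htop : ENNReal.ofReal (1/2) * ⊤ * μ B ^ ((1:ℝ)/n) = ⊤ := by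
      rw [ENNReal.mul_top (by simp), ENNReal.top_mul hBpos]
    rw [htop, add_top] at hBM'
    simpa using le_trans hBM' hRHS1
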